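/- arXiv:1411.1041 — 4 statements merged into one kernel-verified Lean document; each statement's English description precedes it below -/
import Mathlib

section
/- Let S and X be sets, σ : S → S and π : S → X maps, α > 1 a real number, κ' ≥ 0 a real constant, H : X → ℝ a function, and ĥ : S → ℝ a function satisfying ĥ(σ(s)) = α·ĥ(s) and |ĥ(s) − H(π(s))| ≤ κ' for all s ∈ S. If P, Q ∈ S and n ∈ ℕ are such that π(σᵐ(P)) = π(σᵐ(Q)) for all 0 ≤ m ≤ n, then |ĥ(P) − ĥ(Q)| ≤ 2·α⁻ⁿ·κ'. -/
/-- Continuity estimate for the canonical height in the tree topology. -/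
theorem stmt3 {S X : Type*} (σ : S → S) (π : S → X) (α κ' : ℝ) (hα : 1 < α) (hκ' : 0 ≤ κ')
    (H : X → ℝ) (hhat : S → ℝ)
    (h1 : ∀ s : S, hhat (σ s) = α * hhat s)
    (h2 : ∀ s : S, |hhat s - H (π s)| ≤ κ')
    (P Q : S) (n : ℕ) (hagree : ∀ m : ℕ, m ≤ n → π (σ^[m] P) = π (σ^[m] Q)) :
    |hhat P - hhat Q| ≤ 2 * (α ^ n)⁻¹ * κ' := by
  have hα0 : (0:ℝ) < α := lt_trans one_pos hα
  have hαn : (0:ℝ) < α ^ n := pow_pos hα0 n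
  have hiter : ∀ (k : ℕ) (s : S), hhat (σ^[k] s) = α ^ k * hhat s := by
    intro k
    induction k with
    | zero => simp
    | succ k ih =>
      intro s
      rw [Function.iterate_succ_apply', h1, ih, pow_succ]
      ring
  have key : |hhat (σ^[n] P) - hhat (σ^[n] Q)| ≤ 2 * κ' := by
    have e := hagree n le_rfl
    calc |hhat (σ^[n] P) - hhat (σ^[n] Q)|
        = |(hhat (σ^[n] P) - H (π (σ^[n] P))) - (hhat (σ^[n] Q) - H (π (σ^[n] Q)))| := by
          rw [e]; ring_nf
      _ ≤ |hhat (σ^[n] P) - H (π (σ^[n] P))| + |hhat (σ^[n] Q) - H (π (σ^[n] Q))| :=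
          abs_sub (_) (_)
      _ ≤ κ' + κ' := add_le_add (h2 _) (h2 _)
      _ = 2 * κ' := by ring
  have hP := hiter n P
  have hQ := hiter n Q
  have : α ^ n * |hhat P - hhat Q| ≤ 2 * κ' := by
    calc α ^ n * |hhat P - hhat Q| = |α ^ n * (hhat P - hhat Q)| := by
          rw [abs_mul, abs_of_pos hαn]
      _ = |hhat (σ^[n] P) - hhat (σ^[n] Q)| := by rw [hP, hQ]; ring_nf
      _ ≤ 2 * κ' := key
  rw [mul_comm (2:ℝ), mul_assoc]
  rw [mul_comm, ← le_div_iff₀ hαn] at this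
  calc |hhat P - hhat Q| ≤ 2 * κ' / α ^ n := this
    _ = (α ^ n)⁻¹ * (2 * κ') := by ring
end

section
/- Let X be a type and C ⊆ X × X a relation. Let 𝒫 = {f : ℕ → X | ∀ n, (f(n), f(n+1)) ∈ C} carry the subspace topology induced from the product topology on ℕ → X, where X is given the discrete topology. Let α > 1, κ' ≥ 0 be real numbers, H : X → ℝ a function, and ĥ : 𝒫 → ℝ a function satisfying ĥ(σ(f)) = α·ĥ(f) and |ĥ(f) − H(f(0))| ≤ κ' for all f ∈ 𝒫, where σ(f) = (n ↦ f(n+1)). Then ĥ is continuous. -/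
/-- The canonical height is continuous in the tree topology on the path space. -/
theorem stmt4 {X : Type*} (C : Set (X × X)) (α κ' : ℝ) (hα : 1 < α) (hκ' : 0 ≤ κ')
    (H : X → ℝ) (hhat : {f : ℕ → X // ∀ n : ℕ, (f n, f (n + 1)) ∈ C} → ℝ)
    (h1 : ∀ f : {f : ℕ → X // ∀ n : ℕ, (f n, f (n + 1)) ∈ C},
      hhat ⟨fun n => f.1 (n + 1), fun n => f.2 (n + 1)⟩ = α * hhat f)
    (h2 : ∀ f : {f : ℕ → X // ∀ n : ℕ, (f n, f (n + 1)) ∈ C}, |hhat f - H (f.1 0)| ≤ κ') :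
    letI : TopologicalSpace X := ⊥
    Continuous hhat := by
  letI : TopologicalSpace X := ⊥
  haveI : DiscreteTopology X := ⟨rfl⟩
  let s : {f : ℕ → X // ∀ n : ℕ, (f n, f (n + 1)) ∈ C} → {f : ℕ → X // ∀ n : ℕ, (f n, f (n + 1)) ∈ C} :=
    fun f => ⟨fun n => f.1 (n + 1), fun n => f.2 (n + 1)⟩
  have hαpos : (0:ℝ) < α := by linarith
  have hiter : ∀ (n : ℕ) (f : {f : ℕ → X // ∀ n : ℕ, (f n, f (n + 1)) ∈ C}), hhat (s^[n] f) = α ^ n * hhat f := by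
    intro n
    induction n with
    | zero => intro f; simp
    | succ n ih =>
      intro f
      rw [Function.iterate_succ_apply, ih, pow_succ]
      have := h1 f
      simp only [s] at *
      rw [this]; ring
  have hcoord : ∀ (n : ℕ) (f : {f : ℕ → X // ∀ n : ℕ, (f n, f (n + 1)) ∈ C}) (k : ℕ), (s^[n] f).1 k = f.1 (k + n) := by
    intro n
    induction n with
    | zero => intro f k; simp
    | succ n ih =>
      intro f k
      rw [Function.iterate_succ_apply, ih]
      simp only [s]
      congr 1
  have key : ∀ (n : ℕ) (f g : {f : ℕ → X // ∀ n : ℕ, (f n, f (n + 1)) ∈ C}), (∀ k ≤ n, f.1 k = g.1 k) →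
      |hhat f - hhat g| ≤ 2 * κ' / α ^ n := by
    intro n f g hfg
    have hpow : (0:ℝ) < α ^ n := pow_pos hαpos n
    have e1 : |hhat (s^[n] f) - hhat (s^[n] g)| ≤ 2 * κ' := by
      have hf := h2 (s^[n] f)
      have hg := h2 (s^[n] g)
      rw [hcoord n f 0] at hf
      rw [hcoord n g 0] at hg
      have hx : f.1 (0 + n) = g.1 (0 + n) := hfg (0 + n) (by omega)
      rw [hx] at hf
      calc |hhat (s^[n] f) - hhat (s^[n] g)|
          ≤ |hhat (s^[n] f) - H (g.1 (0 + n))| + |hhat (s^[n] g) - H (g.1 (0 + n))| := by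
            rw [← abs_neg (hhat (s^[n] g) - H (g.1 (0 + n)))]
            have := abs_sub_abs_le_abs_sub (hhat (s^[n] f)) (hhat (s^[n] g))
            calc |hhat (s^[n] f) - hhat (s^[n] g)|
                = |(hhat (s^[n] f) - H (g.1 (0 + n))) + -(hhat (s^[n] g) - H (g.1 (0 + n)))| := by
                  ring_nf
              _ ≤ _ := abs_add_le _ _
        _ ≤ κ' + κ' := by gcongr
        _ = 2 * κ' := by ring
    rw [hiter n f, hiter n g] at e1
    have : α ^ n * |hhat f - hhat g| ≤ 2 * κ' := by
      calc α ^ n * |hhat f - hhat g| = |α ^ n * hhat f - α ^ n * hhat g| := by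
            rw [← mul_sub, abs_mul, abs_of_pos hpow]
        _ ≤ 2 * κ' := e1
    rw [le_div_iff₀ hpow]
    linarith [this]
  rw [continuous_iff_continuousAt]
  intro f
  rw [ContinuousAt, Metric.tendsto_nhds]
  intro ε hε
  obtain ⟨n, hn⟩ : ∃ n : ℕ, 2 * κ' / ε < α ^ n := pow_unbounded_of_one_lt _ hα
  have hlt : 2 * κ' / α ^ n < ε := by
    have hpow : (0:ℝ) < α ^ n := pow_pos hαpos n
    rw [div_lt_iff₀ hε] at hn
    rw [div_lt_iff₀ hpow]
    linarith [hn]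
  have hev : ∀ᶠ g : {f : ℕ → X // ∀ n : ℕ, (f n, f (n + 1)) ∈ C} in nhds f, ∀ k ∈ Set.Iic n, g.1 k = f.1 k := by
    refine (Filter.eventually_all_finite (Set.finite_Iic n)).2 ?_
    intro k _
    have hc : Continuous (fun g : {f : ℕ → X // ∀ n : ℕ, (f n, f (n + 1)) ∈ C} => g.1 k) :=
      (continuous_apply k).comp continuous_subtype_val
    have ho : IsOpen {g : {f : ℕ → X // ∀ n : ℕ, (f n, f (n + 1)) ∈ C} | g.1 k = f.1 k} := by
      have : {g : {f : ℕ → X // ∀ n : ℕ, (f n, f (n + 1)) ∈ C} | g.1 k = f.1 k} = (fun g : {f : ℕ → X // ∀ n : ℕ, (f n, f (n + 1)) ∈ C} => g.1 k) ⁻¹' {f.1 k} := rfl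
      rw [this]
      exact hc.isOpen_preimage _ (isOpen_discrete _)
    exact ho.mem_nhds rfl
  filter_upwards [hev] with g hg
  rw [Real.dist_eq]
  calc |hhat g - hhat f| ≤ 2 * κ' / α ^ n := key n g f (fun k hk => hg k hk)
    _ < ε := hlt
end

section
/- Let Z be a type, φ : Z → Z a map, α > 1 a real number, and γ : Z → ℝ a bounded function. Then there exists a unique bounded function γ̂ : Z → ℝ such that γ(z) = γ̂(φ(z)) − α·γ̂(z) for all z ∈ Z. -/
/-- The abstract fixed-point lemma for the functional equation γ = γhat∘φ − α·γhat. -/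
theorem stmt10 {Z : Type*} (φ : Z → Z) (α : ℝ) (hα : 1 < α)
    (γ : Z → ℝ) (hγ : ∃ M : ℝ, ∀ z : Z, |γ z| ≤ M) :
    ∃ γhat : Z → ℝ,
      ((∃ M : ℝ, ∀ z : Z, |γhat z| ≤ M) ∧ ∀ z : Z, γ z = γhat (φ z) - α * γhat z) ∧
      ∀ g : Z → ℝ, ((∃ M : ℝ, ∀ z : Z, |g z| ≤ M) ∧ ∀ z : Z, γ z = g (φ z) - α * g z) →
        g = γhat := by
  obtain ⟨M₀, hM₀⟩ := hγ
  set M : ℝ := max M₀ 0 with hMdef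
  have hM : ∀ z, |γ z| ≤ M := fun z => (hM₀ z).trans (le_max_left _ _)
  have hM0 : (0:ℝ) ≤ M := le_max_right _ _
  have hα0 : (0:ℝ) < α := lt_trans one_pos hα
  have hinv0 : (0:ℝ) < α⁻¹ := inv_pos.mpr hα0
  have hr : |α⁻¹| < 1 := by
    rw [abs_of_pos hinv0]
    exact inv_lt_one_of_one_lt₀ hα
  have hgeo : Summable (fun n : ℕ => α⁻¹ ^ n) := summable_geometric_of_abs_lt_one hr
  -- summability of the defining series
  have hsum : ∀ z : Z, Summable (fun n : ℕ => γ (φ^[n] z) * α⁻¹ ^ n) := by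
    intro z
    apply Summable.of_norm_bounded (hgeo.mul_left M)
    intro n
    rw [Real.norm_eq_abs, abs_mul, abs_pow, abs_of_pos hinv0]
    exact mul_le_mul_of_nonneg_right (hM _) (pow_nonneg hinv0.le n)
  have hsum' : ∀ z : Z, Summable (fun n : ℕ => γ (φ^[n] z) * α⁻¹ ^ (n + 1)) := by
    intro z
    apply Summable.of_norm_bounded (hgeo.mul_left M)
    intro n
    rw [Real.norm_eq_abs, abs_mul, abs_pow, abs_of_pos hinv0]
    calc |γ (φ^[n] z)| * α⁻¹ ^ (n + 1) ≤ M * α⁻¹ ^ (n + 1) :=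
          mul_le_mul_of_nonneg_right (hM _) (pow_nonneg hinv0.le _)
      _ ≤ M * α⁻¹ ^ n := by
          apply mul_le_mul_of_nonneg_left _ hM0
          exact pow_le_pow_of_le_one hinv0.le (by rw [← abs_of_pos hinv0]; exact hr.le)
            (Nat.le_succ n)
  set γhat : Z → ℝ := fun z => -∑' n : ℕ, γ (φ^[n] z) * α⁻¹ ^ (n + 1) with hγhat
  have hbound : ∀ z : Z, |γhat z| ≤ M * (1 - α⁻¹)⁻¹ := by
    intro z
    rw [hγhat]
    simp only [abs_neg]
    have h1 : HasSum (fun n : ℕ => M * α⁻¹ ^ n) (M * (1 - α⁻¹)⁻¹) :=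
      (hasSum_geometric_of_abs_lt_one hr).mul_left M
    have hterm : ∀ n : ℕ, ‖γ (φ^[n] z) * α⁻¹ ^ (n + 1)‖ ≤ M * α⁻¹ ^ n := by
      intro n
      rw [Real.norm_eq_abs, abs_mul, abs_pow, abs_of_pos hinv0]
      calc |γ (φ^[n] z)| * α⁻¹ ^ (n + 1) ≤ M * α⁻¹ ^ (n + 1) :=
            mul_le_mul_of_nonneg_right (hM _) (pow_nonneg hinv0.le _)
        _ ≤ M * α⁻¹ ^ n := by
            apply mul_le_mul_of_nonneg_left _ hM0
            exact pow_le_pow_of_le_one hinv0.le (by rw [← abs_of_pos hinv0]; exact hr.le)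
              (Nat.le_succ n)
    have := tsum_of_norm_bounded h1 hterm
    simpa using this
  have hfe : ∀ z : Z, γ z = γhat (φ z) - α * γhat z := by
    intro z
    have hc : α * γhat z = -∑' n : ℕ, γ (φ^[n] z) * α⁻¹ ^ n := by
      rw [hγhat]
      simp only [mul_neg, neg_inj]
      rw [← tsum_mul_left]
      congr 1
      funext n
      rw [pow_succ]
      field_simp
    have hshift : γhat (φ z) = -∑' n : ℕ, γ (φ^[n + 1] z) * α⁻¹ ^ (n + 1) := by
      rw [hγhat]
      simp only [neg_inj, Function.iterate_succ_apply]
    have hzero : (∑' n : ℕ, γ (φ^[n] z) * α⁻¹ ^ n) =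
        γ z + ∑' n : ℕ, γ (φ^[n + 1] z) * α⁻¹ ^ (n + 1) := by
      have := Summable.tsum_eq_zero_add (hsum z)
      simpa using this
    rw [hshift, hc, sub_neg_eq_add, hzero]
    ring
  refine ⟨γhat, ⟨⟨M * (1 - α⁻¹)⁻¹, hbound⟩, hfe⟩, ?_⟩
  rintro g ⟨⟨Mg, hMg⟩, hg⟩
  funext z
  have hd : ∀ w : Z, g (φ w) - γhat (φ w) = α * (g w - γhat w) := by
    intro w
    have h1 := hg w
    have h2 := hfe w
    nlinarith [h1, h2]
  have key : ∀ n : ℕ, g (φ^[n] z) - γhat (φ^[n] z) = α ^ n * (g z - γhat z) := by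
    intro n
    induction n with
    | zero => simp
    | succ n ih =>
        rw [Function.iterate_succ_apply', hd, ih, pow_succ]
        ring
  have hbd : ∀ n : ℕ, |g z - γhat z| ≤ (Mg + M * (1 - α⁻¹)⁻¹) * α⁻¹ ^ n := by
    intro n
    have h1 : α ^ n * |g z - γhat z| ≤ Mg + M * (1 - α⁻¹)⁻¹ := by
      have h2 : |g (φ^[n] z) - γhat (φ^[n] z)| ≤ Mg + M * (1 - α⁻¹)⁻¹ :=
        (abs_sub _ _).trans (add_le_add (hMg _) (hbound _))
      rw [key n, abs_mul, abs_of_pos (pow_pos hα0 n)] at h2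
      exact h2
    have hpow : (0:ℝ) < α ^ n := pow_pos hα0 n
    have := mul_le_mul_of_nonneg_left h1 (le_of_lt (inv_pos.mpr hpow))
    rw [← mul_assoc, inv_mul_cancel₀ hpow.ne', one_mul] at this
    calc |g z - γhat z| ≤ (α ^ n)⁻¹ * (Mg + M * (1 - α⁻¹)⁻¹) := this
      _ = (Mg + M * (1 - α⁻¹)⁻¹) * α⁻¹ ^ n := by rw [← inv_pow]; ring
  have hten : Filter.Tendsto (fun n : ℕ => (Mg + M * (1 - α⁻¹)⁻¹) * α⁻¹ ^ n)
      Filter.atTop (nhds 0) := by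
    have := tendsto_pow_atTop_nhds_zero_of_abs_lt_one hr
    simpa using this.const_mul (Mg + M * (1 - α⁻¹)⁻¹)
  have h0 : |g z - γhat z| ≤ 0 := ge_of_tendsto' hten (fun n => hbd n)
  have := abs_nonneg (g z - γhat z)
  have : g z - γhat z = 0 := abs_eq_zero.mp (le_antisymm h0 this)
  linarith
end

section
/- Let 𝒳 be a set and (𝒴, ℱ, μ) a measure space, let α > 1 be a real number, and suppose for each y ∈ 𝒴 a topology t_y on 𝒳 is given. Let φ : 𝒳 → 𝒳 be continuous with respect to t_y for every y ∈ 𝒴. Let γ : 𝒳 × 𝒴 → ℝ be a function that is (i) bounded, (ii) continuous in the first coordinate with respect to t_y for each fixed y, (iii) measurable in the second coordinate for each fixed x, and (iv) identically zero outside 𝒳 × W for some measurable W ⊆ 𝒴 with μ(W) < ∞. Then there exists a unique bounded function γ̂ : 𝒳 × 𝒴 → ℝ satisfying γ(x, y) = γ̂(φ(x), y) − α·γ̂(x, y) for all (x, y); moreover γ̂ is continuous in the first coordinate with respect to t_y for each y, measurable in the second coordinate for each x, and for each x ∈ 𝒳 the function y ↦ γ̂(x, y) is integrable with respect to μ. 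-/
open MeasureTheory Filter Topology

/-- Lemma 6.2: existence and uniqueness of the local canonical height defect solution. -/
theorem stmt12 {𝒳 𝒴 : Type*} [MeasurableSpace 𝒴] (μ : MeasureTheory.Measure 𝒴)
    (t : 𝒴 → TopologicalSpace 𝒳) (α : ℝ) (hα : 1 < α)
    (φ : 𝒳 → 𝒳) (hφ : ∀ y : 𝒴, @Continuous _ _ (t y) (t y) φ)
    (γ : 𝒳 → 𝒴 → ℝ)
    (hbd : ∃ M : ℝ, ∀ (x : 𝒳) (y : 𝒴), |γ x y| ≤ M)
    (hcont : ∀ y : 𝒴, @Continuous _ _ (t y) _ fun x => γ x y)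
    (hmeas : ∀ x : 𝒳, Measurable fun y => γ x y)
    (hsupp : ∃ W : Set 𝒴, MeasurableSet W ∧ μ W < ⊤ ∧
      ∀ (x : 𝒳) (y : 𝒴), y ∉ W → γ x y = 0) :
    ∃ γhat : 𝒳 → 𝒴 → ℝ,
      ((∃ M : ℝ, ∀ (x : 𝒳) (y : 𝒴), |γhat x y| ≤ M) ∧
       (∀ (x : 𝒳) (y : 𝒴), γ x y = γhat (φ x) y - α * γhat x y) ∧
       (∀ y : 𝒴, @Continuous _ _ (t y) _ fun x => γhat x y) ∧
       (∀ x : 𝒳, Measurable fun y => γhat x y) ∧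
       (∀ x : 𝒳, MeasureTheory.Integrable (fun y => γhat x y) μ)) ∧
      ∀ g : 𝒳 → 𝒴 → ℝ, (∃ M : ℝ, ∀ (x : 𝒳) (y : 𝒴), |g x y| ≤ M) →
        (∀ (x : 𝒳) (y : 𝒴), γ x y = g (φ x) y - α * g x y) → g = γhat := by
  obtain ⟨M₀, hM₀⟩ := hbd
  obtain ⟨W, hWm, hWfin, hW⟩ := hsupp
  set M : ℝ := max M₀ 0 with hMdef
  have hM : ∀ x y, |γ x y| ≤ M := fun x y => (hM₀ x y).trans (le_max_left _ _)
  have hMnn : 0 ≤ M := le_max_right _ _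
  have hα0 : (0:ℝ) < α := lt_trans one_pos hα
  have hαne : α ≠ 0 := ne_of_gt hα0
  have hιnn : (0:ℝ) ≤ α⁻¹ := inv_nonneg.2 hα0.le
  have hιlt : α⁻¹ < 1 := inv_lt_one_of_one_lt₀ hα
  -- the term of the series
  set f : 𝒳 → 𝒴 → ℕ → ℝ := fun x y n => (α ^ (n+1))⁻¹ * γ (φ^[n] x) y with hfdef
  have hbound : ∀ x y n, ‖f x y n‖ ≤ M * (α⁻¹) ^ (n+1) := by
    intro x y n
    have h1 : ‖f x y n‖ = (α⁻¹) ^ (n+1) * |γ (φ^[n] x) y| := by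
      rw [hfdef]
      simp only [Real.norm_eq_abs, abs_mul, abs_inv, abs_pow, abs_of_pos hα0, inv_pow]
    rw [h1, mul_comm]
    exact mul_le_mul_of_nonneg_right (hM _ _) (by positivity)
  have husum : Summable (fun n => M * (α⁻¹) ^ (n+1) : ℕ → ℝ) := by
    have : Summable (fun n => (M * α⁻¹) * (α⁻¹) ^ n : ℕ → ℝ) :=
      (summable_geometric_of_lt_one hιnn hιlt).mul_left _
    refine this.congr fun n => by ring
  have hsumf : ∀ x y, Summable (f x y) := fun x y =>
    Summable.of_norm_bounded husum (hbound x y)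
  -- an auxiliary shifted series
  set g : 𝒳 → 𝒴 → ℕ → ℝ := fun x y n => (α ^ n)⁻¹ * γ (φ^[n] x) y with hgdef
  have hsumg : ∀ x y, Summable (g x y) := by
    intro x y
    refine Summable.of_norm_bounded
      ((summable_geometric_of_lt_one hιnn hιlt).mul_left M) ?_
    intro n
    have h1 : ‖g x y n‖ = (α⁻¹) ^ n * |γ (φ^[n] x) y| := by
      rw [hgdef]
      simp only [Real.norm_eq_abs, abs_mul, abs_inv, abs_pow, abs_of_pos hα0, inv_pow]
    rw [h1, mul_comm]
    exact mul_le_mul_of_nonneg_right (hM _ _) (by positivity)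
  set γhat : 𝒳 → 𝒴 → ℝ := fun x y => -∑' n, f x y n with hγhatdef
  -- boundedness of γhat
  set C : ℝ := ∑' n, M * (α⁻¹) ^ (n+1) with hCdef
  have hγhatbd : ∀ x y, |γhat x y| ≤ C := by
    intro x y
    rw [hγhatdef]
    simp only [abs_neg]
    have hsn : Summable fun n => ‖f x y n‖ :=
      (hsumf x y).abs.congr fun n => (Real.norm_eq_abs _).symm
    calc |∑' n, f x y n| = ‖∑' n, f x y n‖ := (Real.norm_eq_abs _).symm
      _ ≤ ∑' n, ‖f x y n‖ := norm_tsum_le_tsum_norm hsn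
      _ ≤ C := Summable.tsum_le_tsum (hbound x y) hsn husum
  -- the functional equation
  have heq : ∀ x y, γ x y = γhat (φ x) y - α * γhat x y := by
    intro x y
    have h1 : ∀ n, α * f x y n = g x y n := by
      intro n
      rw [hfdef, hgdef]
      simp only []
      field_simp
      ring
    have h2 : ∀ n, f (φ x) y n = g x y (n+1) := by
      intro n
      rw [hfdef, hgdef]
      simp only [Function.iterate_succ_apply]
    have h3 : γhat (φ x) y = -∑' n, g x y (n+1) := by
      rw [hγhatdef]
      exact congrArg Neg.neg (tsum_congr h2)
    have h4 : α * γhat x y = -∑' n, g x y (n+1) - γ x y := by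
      rw [hγhatdef, mul_neg, ← tsum_mul_left]
      rw [tsum_congr h1]
      have h5 : ∑' n, g x y n = g x y 0 + ∑' n, g x y (n+1) :=
        Summable.tsum_eq_zero_add (hsumg x y)
      have hg0 : g x y 0 = γ x y := by rw [hgdef]; simp
      rw [h5, hg0]
      ring
    rw [h3, h4]; ring
  refine ⟨γhat, ⟨⟨C, hγhatbd⟩, heq, ?_, ?_, ?_⟩, ?_⟩
  · -- continuity in the first coordinate
    intro y
    letI := t y
    have : Continuous fun x => ∑' n, f x y n := by
      refine continuous_tsum (fun n => ?_) husum (fun n x => hbound x y n)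
      exact continuous_const.mul ((hcont y).comp ((hφ y).iterate n))
    exact this.neg
  · -- measurability in the second coordinate
    intro x
    have hpart : ∀ N : ℕ, Measurable (fun y => ∑ n ∈ Finset.range N, f x y n) := by
      intro N
      exact Finset.measurable_sum _ fun n _ => (measurable_const.mul (hmeas (φ^[n] x)))
    have hlim : Tendsto (fun N => fun y => ∑ n ∈ Finset.range N, f x y n) atTop
        (𝓝 fun y => ∑' n, f x y n) := by
      rw [tendsto_pi_nhds]
      intro y
      exact (hsumf x y).hasSum.tendsto_sum_nat
    exact (measurable_of_tendsto_metrizable hpart hlim).neg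
  · -- integrability
    intro x
    have hz : ∀ y, y ∉ W → γhat x y = 0 := by
      intro y hy
      rw [hγhatdef]
      have : ∀ n, f x y n = 0 := by
        intro n; rw [hfdef]; simp [hW _ _ hy]
      simp [tsum_congr this]
    refine Integrable.mono' (g := W.indicator fun _ => C) ?_ ?_ ?_
    · rw [integrable_indicator_iff hWm]
      exact integrableOn_const hWfin.ne
    · -- aestrongly measurable
      have hpart : ∀ N : ℕ, Measurable (fun y => ∑ n ∈ Finset.range N, f x y n) := by
        intro N
        exact Finset.measurable_sum _ fun n _ => (measurable_const.mul (hmeas (φ^[n] x)))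
      have hlim : Tendsto (fun N => fun y => ∑ n ∈ Finset.range N, f x y n) atTop
          (𝓝 fun y => ∑' n, f x y n) := by
        rw [tendsto_pi_nhds]
        intro y
        exact (hsumf x y).hasSum.tendsto_sum_nat
      exact ((measurable_of_tendsto_metrizable hpart hlim).neg).aestronglyMeasurable
    · refine Filter.Eventually.of_forall fun y => ?_
      by_cases hy : y ∈ W
      · rw [Set.indicator_of_mem hy]
        exact (hγhatbd x y)
      · rw [Set.indicator_of_notMem hy, hz y hy]
        simp
  · -- uniqueness
    intro h ⟨Mh, hMh⟩ hheq
    funext x y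
    set d : 𝒳 → ℝ := fun x => h x y - γhat x y with hddef
    have hdstep : ∀ x, d (φ x) = α * d x := by
      intro x
      have e1 := hheq x y
      have e2 := heq x y
      rw [hddef]
      simp only []
      nlinarith [e1, e2]
    have hditer : ∀ n x, d (φ^[n] x) = α ^ n * d x := by
      intro n
      induction n with
      | zero => intro x; simp
      | succ n ih =>
        intro x
        rw [Function.iterate_succ_apply', hdstep, ih]
        ring
    have hdbd : ∀ z, |d z| ≤ Mh + C := by
      intro z
      rw [hddef]
      simp only []
      calc |h z y - γhat z y| ≤ |h z y| + |γhat z y| := abs_sub _ _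
        _ ≤ Mh + C := add_le_add (hMh z y) (hγhatbd z y)
    have hd0 : d x = 0 := by
      by_contra hne
      have hpos : 0 < |d x| := abs_pos.2 hne
      have htend : Tendsto (fun n : ℕ => α ^ n * |d x|) atTop atTop :=
        (tendsto_pow_atTop_atTop_of_one_lt hα).atTop_mul_const hpos
      obtain ⟨n, hn⟩ := (htend.eventually_gt_atTop (Mh + C)).exists
      have : α ^ n * |d x| ≤ Mh + C := by
        have := hdbd (φ^[n] x)
        rw [hditer n x, abs_mul, abs_of_pos (pow_pos hα0 n)] at this
        exact this
      linarith
    have : h x y = γhat x y := by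
      have := hd0
      rw [hddef] at this
      simp only [] at this
      linarith
    exact this
end
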